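/- (Cone condition.) Under the hypotheses and conclusion of the basic inequality for the corrupted Lasso, the error vectors z = Δ̂ − Δ* and v = ê − e* satisfy λ_Δ‖z‖₁ + λ_e‖v‖₁ ≤ 4λ_Δ‖z_T‖₁ + 4λ_e‖v_E‖₁, and consequently λ_Δ‖z‖₁ ≤ 4√(s_Δ) λ_Δ ‖z‖₂ + 4√k λ_e ‖v‖₂, where s_Δ = |T| and k = |E|. -/
import Mathlib


/-- Cauchy–Schwarz: ℓ¹ norm on a set bounded by √card times full ℓ² norm. -/
lemma l1_le_sqrt_card_l2 {ι : Type*} [Fintype ι] (s : Finset ι) (z : ι → ℝ) :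
    (∑ j ∈ s, |z j|) ≤ Real.sqrt s.card * Real.sqrt (∑ j, (z j)^2) := by
  have h := Real.sum_mul_le_sqrt_mul_sqrt s (fun _ => (1:ℝ)) (fun j => |z j|)
  simp only [one_mul, one_pow, Finset.sum_const, nsmul_eq_mul, mul_one, sq_abs] at h
  refine h.trans (mul_le_mul_of_nonneg_left (Real.sqrt_le_sqrt ?_) (Real.sqrt_nonneg _))
  exact Finset.sum_le_sum_of_subset_of_nonneg (Finset.subset_univ s)
    (fun i _ _ => sq_nonneg _)

/-- cone condition for the corrupted Lasso errors. -/
theorem stmt7 {n p : ℕ} (hn : 0 < n) (X : Matrix (Fin n) (Fin p) ℝ)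
    (z : Fin p → ℝ) (v : Fin n → ℝ) (T : Finset (Fin p)) (E : Finset (Fin n))
    (lΔ le : ℝ) (hlΔ : 0 ≤ lΔ) (hle : 0 ≤ le)
    (hbasic : (2 * n : ℝ)⁻¹ * (∑ i, (X.mulVec z i + Real.sqrt n * v i)^2) ≤
      (3/2) * lΔ * (∑ j ∈ T, |z j|) - (1/2) * lΔ * (∑ j ∈ Tᶜ, |z j|)
      + (3/2) * le * (∑ i ∈ E, |v i|) - (1/2) * le * (∑ i ∈ Eᶜ, |v i|)) :
    lΔ * (∑ j, |z j|) + le * (∑ i, |v i|)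
        ≤ 4 * lΔ * (∑ j ∈ T, |z j|) + 4 * le * (∑ i ∈ E, |v i|)
    ∧ lΔ * (∑ j, |z j|)
        ≤ 4 * Real.sqrt T.card * lΔ * Real.sqrt (∑ j, (z j)^2)
          + 4 * Real.sqrt E.card * le * Real.sqrt (∑ i, (v i)^2) := by
  have h0 : (0:ℝ) ≤ (2 * n : ℝ)⁻¹ * (∑ i, (X.mulVec z i + Real.sqrt n * v i)^2) := by
    apply mul_nonneg
    · positivity
    · exact Finset.sum_nonneg fun i _ => sq_nonneg _
  have hrhs := h0.trans hbasic
  have hzsplit : (∑ j, |z j|) = (∑ j ∈ T, |z j|) + (∑ j ∈ Tᶜ, |z j|) :=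
    (Finset.sum_add_sum_compl T _).symm
  have hvsplit : (∑ i, |v i|) = (∑ i ∈ E, |v i|) + (∑ i ∈ Eᶜ, |v i|) :=
    (Finset.sum_add_sum_compl E _).symm
  have h1 : lΔ * (∑ j, |z j|) + le * (∑ i, |v i|)
      ≤ 4 * lΔ * (∑ j ∈ T, |z j|) + 4 * le * (∑ i ∈ E, |v i|) := by
    rw [hzsplit, hvsplit]; nlinarith [hrhs]
  refine ⟨h1, ?_⟩
  have hvnn : 0 ≤ le * (∑ i, |v i|) :=
    mul_nonneg hle (Finset.sum_nonneg fun i _ => abs_nonneg _)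
  have hT := l1_le_sqrt_card_l2 T z
  have hE := l1_le_sqrt_card_l2 E v
  have hEfull : (∑ i ∈ E, |v i|) ≤ (∑ i, |v i|) :=
    Finset.sum_le_sum_of_subset_of_nonneg (Finset.subset_univ E)
      (fun i _ _ => abs_nonneg _)
  calc lΔ * (∑ j, |z j|) ≤ 4 * lΔ * (∑ j ∈ T, |z j|) + 4 * le * (∑ i ∈ E, |v i|) := by
        linarith
    _ ≤ 4 * Real.sqrt T.card * lΔ * Real.sqrt (∑ j, (z j)^2)
          + 4 * Real.sqrt E.card * le * Real.sqrt (∑ i, (v i)^2) := by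
        have h2 : 4 * lΔ * (∑ j ∈ T, |z j|)
            ≤ 4 * Real.sqrt T.card * lΔ * Real.sqrt (∑ j, (z j)^2) := by
          have := mul_le_mul_of_nonneg_left hT (by positivity : (0:ℝ) ≤ 4 * lΔ)
          nlinarith
        have h3 : 4 * le * (∑ i ∈ E, |v i|)
            ≤ 4 * Real.sqrt E.card * le * Real.sqrt (∑ i, (v i)^2) := by
          have := mul_le_mul_of_nonneg_left hE (by positivity : (0:ℝ) ≤ 4 * le)
          nlinarith
        linarith
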